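/- Let P, Q, U be probability measures on ℝ^n with P and Q admitting densities p and q, Q ≪ P, and let E(x) = q(x)/p(x). Suppose T(x) = c·E(x) for some constant c > 0 with T(x) < ∞ for all x. Let X ~ W with W ∈ {P, Q}, and let Y^{(1)}, Y^{(2)}, ... be i.i.d. samples from U, independent of X. If 0 < E^U[E(Y)] = ∫ (q(y)/p(y)) dU(y) < ∞, then the Besag-Clifford e-value Ê_M(X) = (M+1)·T(X) / (T(X) + Σ_{m=1}^M T(Y^{(m)})) converges almost surely to E(X) / E^U[E(Y)] as M → ∞. -/

import Mathlib

open MeasureTheory ProbabilityTheory Filter Finset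

/-- **biased sampling limit, equation (5) of the paper.**
Let `P, Q, U` be probability measures on `ℝⁿ`, with `P, Q` admitting Lebesgue
densities `p, q`, `Q ≪ P`, and `E(x) = q(x)/p(x)`. Suppose `T(x) = c·E(x)` with
`c > 0`. If `X ~ W` with `W ∈ {P, Q}` and `Y⁽¹⁾, Y⁽²⁾, …` are i.i.d. from `U`,
independent of `X`, and `0 < E^U[E(Y)] = ∫ (q/p) dU < ∞`, then
`Ê_M(X) = (M+1)·T(X)/(T(X) + Σ_{m=1}^M T(Y⁽ᵐ⁾))` converges almost surely to
`E(X) / E^U[E(Y)]`. -/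
theorem besag_clifford_biased_sampling
    {n : ℕ} {Ω : Type*} [MeasurableSpace Ω]
    (μ : Measure Ω) [IsProbabilityMeasure μ]
    (P Q U W : Measure (Fin n → ℝ))
    [IsProbabilityMeasure P] [IsProbabilityMeasure Q] [IsProbabilityMeasure U]
    (p q : (Fin n → ℝ) → ℝ) (hp : Measurable p) (hq : Measurable q)
    (hp0 : ∀ x, 0 ≤ p x) (hq0 : ∀ x, 0 ≤ q x)
    (hP : P = volume.withDensity (fun x => ENNReal.ofReal (p x)))
    (hQ : Q = volume.withDensity (fun x => ENNReal.ofReal (q x)))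
    (hQP : Q ≪ P)
    (T : (Fin n → ℝ) → ℝ) (c : ℝ) (hc : 0 < c)
    (hTdef : ∀ x, T x = c * (q x / p x))
    (X : Ω → (Fin n → ℝ)) (Y : ℕ → Ω → (Fin n → ℝ))
    (hX : Measurable X) (hY : ∀ m, Measurable (Y m))
    (hW : W = P ∨ W = Q)
    (hXlaw : Measure.map X μ = W)
    (hYlaw : ∀ m, Measure.map (Y m) μ = U)
    -- `X, Y⁽¹⁾, Y⁽²⁾, …` are jointly independent (so the `Y`'s are i.i.d. from `U`,
    -- independent of `X`)
    (hindep : iIndepFun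
      (fun o : Option ℕ => Option.elim o X Y) μ)
    -- `0 < E^U[E(Y)] < ∞`
    (hpos : 0 < ∫ y, q y / p y ∂U)
    (hint : Integrable (fun y => q y / p y) U) :
    ∀ᵐ ω ∂μ, Tendsto
      (fun M : ℕ =>
        ((M : ℝ) + 1) * T (X ω) / (T (X ω) + ∑ m ∈ Finset.range M, T (Y m ω)))
      atTop (nhds ((q (X ω) / p (X ω)) / ∫ y, q y / p y ∂U)) := by
  set f : (Fin n → ℝ) → ℝ := fun x => q x / p x with hf
  have hfmeas : Measurable f := hq.div hp
  set I : ℝ := ∫ y, f y ∂U with hI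
  -- the composed random variables
  set g : ℕ → Ω → ℝ := fun m ω => f (Y m ω) with hg
  have hgmeas : ∀ m, Measurable (g m) := fun m => hfmeas.comp (hY m)
  have hgint : Integrable (g 0) μ := by
    have := (integrable_map_measure hfmeas.aestronglyMeasurable (hY 0).aemeasurable
      (μ := μ)).mp
    rw [hYlaw 0] at this
    exact this hint
  have hgindep : Pairwise (Function.onFun (IndepFun · · μ) g) := by
    intro i j hij
    have : IndepFun (Y i) (Y j) μ := by
      have := hindep.indepFun (i := some i) (j := some j) (by simpa using hij)
      exact this
    exact this.comp hfmeas hfmeas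
  have hgident : ∀ i, IdentDistrib (g i) (g 0) μ μ := by
    intro i
    have h1 : IdentDistrib (Y i) (Y 0) μ μ :=
      ⟨(hY i).aemeasurable, (hY 0).aemeasurable, by rw [hYlaw i, hYlaw 0]⟩
    exact h1.comp hfmeas
  have hmean : μ[g 0] = I := by
    rw [hI, hg]
    rw [← hYlaw 0, integral_map (hY 0).aemeasurable hfmeas.aestronglyMeasurable]
  have hslln := strong_law_ae_real g hgint hgindep hgident
  rw [hmean] at hslln
  filter_upwards [hslln] with ω hω
  -- now a deterministic limit computation
  set a : ℝ := f (X ω) with ha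
  have ha0 : 0 ≤ a := div_nonneg (hq0 _) (hp0 _)
  -- rewrite T in terms of f, cancel c
  have hrw : ∀ M : ℕ,
      ((M : ℝ) + 1) * T (X ω) / (T (X ω) + ∑ m ∈ Finset.range M, T (Y m ω))
      = ((M : ℝ) + 1) * a / (a + ∑ m ∈ Finset.range M, g m ω) := by
    intro M
    simp only [hTdef]
    rw [← Finset.mul_sum, ← mul_add]
    rw [mul_comm ((M : ℝ) + 1) (c * (q (X ω) / p (X ω))), mul_assoc,
      mul_div_mul_left _ _ (ne_of_gt hc)]
    simp [hg, hf, div_eq_mul_inv]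
    ring_nf
    simp only [ha, hf]
    ring
  simp only [hrw]
  -- the limit
  have key : Tendsto (fun M : ℕ =>
      (((M : ℝ) + 1) / M * a) / ((a + ∑ m ∈ Finset.range M, g m ω) / M))
      atTop (nhds (a / I)) := by
    have h1 : Tendsto (fun M : ℕ => ((M : ℝ) + 1) / M * a) atTop (nhds a) := by
      have : Tendsto (fun M : ℕ => ((M : ℝ) + 1) / M) atTop (nhds 1) := by
        have := (tendsto_const_nhds :
            Tendsto (fun _ : ℕ => (1 : ℝ)) atTop (nhds 1)).add
          tendsto_one_div_atTop_nhds_zero_nat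
        simp only [add_zero] at this
        refine this.congr' ?_
        filter_upwards [eventually_ne_atTop 0] with M hM
        field_simp
      simpa using this.mul_const a
    have h2 : Tendsto (fun M : ℕ => (a + ∑ m ∈ Finset.range M, g m ω) / M)
        atTop (nhds I) := by
      have h3 : Tendsto (fun M : ℕ => a / M) atTop (nhds 0) := by
        simpa [div_eq_mul_inv] using (tendsto_one_div_atTop_nhds_zero_nat).const_mul a
      have := h3.add hω
      simp only [zero_add] at this
      refine this.congr fun M => ?_
      rw [add_div]
    exact h1.div h2 (ne_of_gt hpos)
  refine key.congr' ?_
  filter_upwards [eventually_ne_atTop 0] with M hM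
  have hMne : (M : ℝ) ≠ 0 := Nat.cast_ne_zero.mpr hM
  rw [div_mul_eq_mul_div, div_div_div_cancel_right₀ hMne]
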